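/- arXiv:1008.1512 — 4 statements merged into one kernel-verified Lean document; each statement's English description precedes it below -/
import Mathlib

section
/- Let ξ take positive values γ_1 < ... < γ_N < 1 with probabilities p_i, and let Y = Σ_{k≥0} ξ_1···ξ_k for i.i.d. copies ξ_j of ξ. If the entropy condition Σ_i p_i log γ_i < Σ_i p_i log p_i holds, then the distribution of Y is singular with respect to Lebesgue measure. -/
set_option maxHeartbeats 1000000


open MeasureTheory ProbabilityTheory Finset

/-- Extension of a finite word to an `ℕ`-indexed sequence of reals (via `γ`), padded by `1`. -/
noncomputable def auxExt {N : ℕ} (γ : Fin N → ℝ) (n : ℕ) (w : Fin n → Fin N) (j : ℕ) : ℝ :=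
  if h : j < n then γ (w ⟨j, h⟩) else 1

/-- Left endpoint of the interval associated to a word. -/
noncomputable def auxS {N : ℕ} (γ : Fin N → ℝ) (n : ℕ) (w : Fin n → Fin N) : ℝ :=
  ∑ k ∈ Finset.range n, ∏ j ∈ Finset.range k, auxExt γ n w j

/-- The set of "typical" words of length `n`. -/
noncomputable def auxT {N : ℕ} (γ p : Fin N → ℝ) (aa bb : ℝ) (n : ℕ) :
    Finset (Fin n → Fin N) :=
  Finset.univ.filter fun w =>
    (∏ j, γ (w j)) ≤ Real.exp (n * aa) ∧ Real.exp (n * bb) ≤ ∏ j, p (w j)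

/-- The covering set at stage `n`. -/
noncomputable def auxA {N : ℕ} (γ p : Fin N → ℝ) (aa bb C : ℝ) (n : ℕ) : Set ℝ :=
  ⋃ w ∈ auxT γ p aa bb n, Set.Icc (auxS γ n w) (auxS γ n w + C * Real.exp (n * aa))

lemma auxA_measurable {N : ℕ} (γ p : Fin N → ℝ) (aa bb C : ℝ) (n : ℕ) :
    MeasurableSet (auxA γ p aa bb C n) :=
  (auxT γ p aa bb n).measurableSet_biUnion fun _ _ => measurableSet_Icc

lemma auxT_card {N : ℕ} (γ p : Fin N → ℝ) (aa bb : ℝ) (n : ℕ)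
    (hp0 : ∀ i, 0 ≤ p i) (hp1 : ∑ i, p i = 1) :
    ((auxT γ p aa bb n).card : ℝ) * Real.exp (n * bb) ≤ 1 := by
  have h1 : ((auxT γ p aa bb n).card : ℝ) * Real.exp (n * bb)
      = ∑ _w ∈ auxT γ p aa bb n, Real.exp (n * bb) := by
    rw [Finset.sum_const, nsmul_eq_mul]
  have h2 : ∑ _w ∈ auxT γ p aa bb n, Real.exp (n * bb)
      ≤ ∑ w ∈ auxT γ p aa bb n, ∏ j, p (w j) := by
    refine Finset.sum_le_sum fun w hw => ?_
    exact ((Finset.mem_filter.mp hw).2).2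
  have h3 : ∑ w ∈ auxT γ p aa bb n, ∏ j, p (w j)
      ≤ ∑ w : Fin n → Fin N, ∏ j, p (w j) := by
    refine Finset.sum_le_sum_of_subset_of_nonneg (Finset.subset_univ _) ?_
    intro w _ _
    exact Finset.prod_nonneg fun j _ => hp0 _
  have h4 : ∑ w : Fin n → Fin N, ∏ j, p (w j) = 1 := by
    have := Finset.prod_univ_sum (fun _ : Fin n => (Finset.univ : Finset (Fin N)))
      (fun _ i => p i)
    rw [Fintype.piFinset_univ] at this
    rw [← this]
    simp [hp1]
  linarith

lemma auxA_volume {N : ℕ} (γ p : Fin N → ℝ) (aa bb C : ℝ) (n : ℕ)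
    (hp0 : ∀ i, 0 ≤ p i) (hp1 : ∑ i, p i = 1) (hC : 0 ≤ C) :
    volume (auxA γ p aa bb C n)
      ≤ ENNReal.ofReal (C * Real.exp (aa - bb) ^ n) := by
  have hlen : 0 ≤ C * Real.exp (n * aa) := mul_nonneg hC (Real.exp_pos _).le
  calc volume (auxA γ p aa bb C n)
      ≤ ∑ w ∈ auxT γ p aa bb n,
          volume (Set.Icc (auxS γ n w) (auxS γ n w + C * Real.exp (n * aa))) :=
        measure_biUnion_finset_le _ _
    _ = (auxT γ p aa bb n).card • ENNReal.ofReal (C * Real.exp (n * aa)) := by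
        rw [← Finset.sum_const]
        refine Finset.sum_congr rfl fun w _ => ?_
        rw [Real.volume_Icc]
        ring_nf
    _ = ENNReal.ofReal ((auxT γ p aa bb n).card : ℝ)
          * ENNReal.ofReal (C * Real.exp (n * aa)) := by
        rw [nsmul_eq_mul, ENNReal.ofReal_natCast]
    _ = ENNReal.ofReal (((auxT γ p aa bb n).card : ℝ) * (C * Real.exp (n * aa))) := by
        rw [← ENNReal.ofReal_mul (by positivity)]
    _ ≤ ENNReal.ofReal (C * Real.exp (aa - bb) ^ n) := by
        apply ENNReal.ofReal_le_ofReal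
        have hcard : ((auxT γ p aa bb n).card : ℝ) ≤ Real.exp (-(n * bb)) := by
          have h := auxT_card γ p aa bb n hp0 hp1
          have hpos : (0:ℝ) < Real.exp (n * bb) := Real.exp_pos _
          rw [Real.exp_neg, ← one_div]
          exact (le_div_iff₀ hpos).mpr h
        have hkey : Real.exp (-(n * bb)) * (C * Real.exp (n * aa))
            = C * Real.exp (aa - bb) ^ n := by
          rw [← Real.exp_nat_mul]
          have h2 : Real.exp (-(↑n * bb)) * Real.exp (↑n * aa) = Real.exp (↑n * (aa - bb)) := by
            rw [← Real.exp_add]; ring_nf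
          calc Real.exp (-(↑n * bb)) * (C * Real.exp (↑n * aa))
              = C * (Real.exp (-(↑n * bb)) * Real.exp (↑n * aa)) := by ring
            _ = C * Real.exp (↑n * (aa - bb)) := by rw [h2]
        calc ((auxT γ p aa bb n).card : ℝ) * (C * Real.exp (n * aa))
            ≤ Real.exp (-(n * bb)) * (C * Real.exp (n * aa)) := by
              exact mul_le_mul_of_nonneg_right hcard hlen
          _ = C * Real.exp (aa - bb) ^ n := hkey

lemma aux_summable {q : ℝ} (hq0 : 0 ≤ q) (hq1 : q < 1) (x : ℕ → ℝ)
    (hxpos : ∀ j, 0 < x j) (hxle : ∀ j, x j ≤ q) :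
    Summable fun k => ∏ j ∈ Finset.range k, x j := by
  refine Summable.of_nonneg_of_le (fun k => Finset.prod_nonneg fun j _ => (hxpos j).le)
    (fun k => ?_) (summable_geometric_of_lt_one hq0 hq1)
  calc ∏ j ∈ Finset.range k, x j ≤ ∏ _j ∈ Finset.range k, q :=
        Finset.prod_le_prod (fun j _ => (hxpos j).le) (fun j _ => hxle j)
    _ = q ^ k := by rw [Finset.prod_const, Finset.card_range]

lemma auxA_mem {N : ℕ} (γ p : Fin N → ℝ) {q C aa bb : ℝ}
    (hq0 : 0 ≤ q) (hq1 : q < 1) (hC : C = (1 - q)⁻¹)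
    {n : ℕ} (x : ℕ → ℝ) (w : Fin n → Fin N)
    (hxw : ∀ j : Fin n, x j = γ (w j))
    (hxpos : ∀ j, 0 < x j) (hxle : ∀ j, x j ≤ q)
    (h1 : (∏ j ∈ Finset.range n, x j) ≤ Real.exp (n * aa))
    (h2 : Real.exp (n * bb) ≤ ∏ j, p (w j)) :
    (∑' k, ∏ j ∈ Finset.range k, x j) ∈ auxA γ p aa bb C n := by
  have hsum : Summable fun k => ∏ j ∈ Finset.range k, x j :=
    aux_summable hq0 hq1 x hxpos hxle
  have hC0 : 0 ≤ C := by
    rw [hC]; exact inv_nonneg.mpr (by linarith)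
  -- the extension of w agrees with x below n
  have hext : ∀ j < n, auxExt γ n w j = x j := by
    intro j hj
    rw [auxExt, dif_pos hj, ← hxw ⟨j, hj⟩]
  -- products of γ over the word equal products of x
  have hprodγ : ∏ j, γ (w j) = ∏ j ∈ Finset.range n, x j := by
    rw [← Fin.prod_univ_eq_prod_range (fun j => x j) n]
    exact Finset.prod_congr rfl fun j _ => (hxw j).symm
  -- membership of the word in the typical set
  have hwT : w ∈ auxT γ p aa bb n := by
    rw [auxT, Finset.mem_filter]
    exact ⟨Finset.mem_univ _, by rw [hprodγ]; exact h1, h2⟩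
  -- the left endpoint is the partial sum
  have hS : auxS γ n w = ∑ k ∈ Finset.range n, ∏ j ∈ Finset.range k, x j := by
    rw [auxS]
    refine Finset.sum_congr rfl fun k hk => Finset.prod_congr rfl fun j hj => ?_
    exact hext j (lt_of_lt_of_le (Finset.mem_range.mp hj)
      (Finset.mem_range.mp hk).le)
  refine Set.mem_biUnion hwT ?_
  constructor
  · rw [hS]
    exact Summable.sum_le_tsum (Finset.range n)
      (fun k _ => Finset.prod_nonneg fun j _ => (hxpos j).le) hsum
  · -- upper bound via the geometric tail
    have hsplit := hsum.sum_add_tsum_nat_add n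
    have htail : (∑' k, ∏ j ∈ Finset.range (k + n), x j)
        ≤ (∏ j ∈ Finset.range n, x j) * C := by
      have hPn : 0 ≤ ∏ j ∈ Finset.range n, x j :=
        Finset.prod_nonneg fun j _ => (hxpos j).le
      have hle : ∀ k : ℕ, (∏ j ∈ Finset.range (k + n), x j)
          ≤ (∏ j ∈ Finset.range n, x j) * q ^ k := by
        intro k
        rw [add_comm k n, Finset.prod_range_add]
        refine mul_le_mul_of_nonneg_left ?_ hPn
        calc ∏ j ∈ Finset.range k, x (n + j) ≤ ∏ _j ∈ Finset.range k, q :=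
              Finset.prod_le_prod (fun j _ => (hxpos _).le) (fun j _ => hxle _)
          _ = q ^ k := by rw [Finset.prod_const, Finset.card_range]
      calc (∑' k, ∏ j ∈ Finset.range (k + n), x j)
          ≤ ∑' k : ℕ, (∏ j ∈ Finset.range n, x j) * q ^ k := by
            refine ((summable_nat_add_iff n).mpr hsum).tsum_le_tsum hle ?_
            exact (summable_geometric_of_lt_one hq0 hq1).mul_left _
        _ = (∏ j ∈ Finset.range n, x j) * (1 - q)⁻¹ := by
            rw [tsum_mul_left, tsum_geometric_of_lt_one hq0 hq1]
        _ = (∏ j ∈ Finset.range n, x j) * C := by rw [hC]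
    have hfinal : (∏ j ∈ Finset.range n, x j) * C ≤ C * Real.exp (n * aa) := by
      rw [mul_comm]
      exact mul_le_mul_of_nonneg_left h1 hC0
    rw [hS]
    calc (∑' k, ∏ j ∈ Finset.range k, x j)
        = (∑ k ∈ Finset.range n, ∏ j ∈ Finset.range k, x j)
          + ∑' k, ∏ j ∈ Finset.range (k + n), x j := hsplit.symm
      _ ≤ (∑ k ∈ Finset.range n, ∏ j ∈ Finset.range k, x j) + C * Real.exp (n * aa) := by
          linarith

/-- Theorem 1 of the paper. Let `ξ` take positive values
`γ₁ < ⋯ < γ_N < 1` with probabilities `p i`, and `Y = ∑_{k≥0} ξ₁⋯ξ_k` for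
i.i.d. copies `ξ j` of `ξ`.  If the entropy condition
`∑ i, p i * log (γ i) < ∑ i, p i * log (p i)` holds, then the distribution of
`Y` is singular with respect to Lebesgue measure. -/
theorem stmt4_entropy_singular
    {Ω : Type*} [MeasurableSpace Ω] (P : Measure Ω) [IsProbabilityMeasure P]
    (N : ℕ) (hN : 0 < N) (γ : Fin N → ℝ)
    (hγpos : ∀ i, 0 < γ i) (hγmono : StrictMono γ) (hγlt : ∀ i, γ i < 1)
    (ξ : ℕ → Ω → ℝ)
    (hmeas : ∀ j, Measurable (ξ j))
    (hval : ∀ j ω, ξ j ω ∈ Set.range γ)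
    (hindep : iIndepFun (m := fun _ : ℕ => (inferInstance : MeasurableSpace ℝ)) ξ P)
    (hident : ∀ j, Measure.map (ξ j) P = Measure.map (ξ 0) P)
    (p : Fin N → ℝ) (hp : ∀ i, p i = (P {ω | ξ 0 ω = γ i}).toReal)
    (hentropy : ∑ i, p i * Real.log (γ i) < ∑ i, p i * Real.log (p i))
    (Y : Ω → ℝ) (hY : ∀ ω, Y ω = ∑' k, ∏ j ∈ Finset.range k, ξ j ω) :
    (Measure.map Y P) ⟂ₘ (volume : Measure ℝ) := by
  classical
  -- the largest value of γ
  set q : ℝ := γ ⟨N - 1, by omega⟩ with hq_def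
  have hqmax : ∀ i, γ i ≤ q := by
    intro i
    exact hγmono.monotone (by
      rw [Fin.le_def]
      have := i.isLt
      simp only []
      omega)
  have hq0 : 0 < q := hγpos _
  have hq1 : q < 1 := hγlt _
  have hξpos : ∀ j ω, 0 < ξ j ω := by
    intro j ω
    obtain ⟨i, hi⟩ := hval j ω
    rw [← hi]; exact hγpos i
  have hξle : ∀ j ω, ξ j ω ≤ q := by
    intro j ω
    obtain ⟨i, hi⟩ := hval j ω
    rw [← hi]; exact hqmax i
  -- an index function
  obtain ⟨idx, hidx⟩ : ∃ idx : ℝ → Fin N, ∀ x ∈ Set.range γ, γ (idx x) = x := by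
    refine ⟨fun x => if h : ∃ i, γ i = x then h.choose else ⟨0, hN⟩, fun x hx => ?_⟩
    rw [Set.mem_range] at hx
    simp only [dif_pos hx]
    exact hx.choose_spec
  -- basic facts about p
  have hp0 : ∀ i, 0 ≤ p i := fun i => (hp i) ▸ ENNReal.toReal_nonneg
  have hEdef : ∀ i, {ω | ξ 0 ω = γ i} = ξ 0 ⁻¹' {γ i} := by
    intro i; ext ω; simp [Set.mem_preimage]
  have hEmeas : ∀ i, MeasurableSet {ω | ξ 0 ω = γ i} := by
    intro i; rw [hEdef i]; exact (hmeas 0) (measurableSet_singleton _)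
  have hEdisj : Pairwise (Function.onFun Disjoint fun i => {ω | ξ 0 ω = γ i}) := by
    intro i j hij
    refine Set.disjoint_left.mpr fun ω hi hj => ?_
    exact hij (hγmono.injective (hi.symm.trans hj))
  have hEcover : ⋃ i, {ω | ξ 0 ω = γ i} = Set.univ := by
    ext ω
    simp only [Set.mem_iUnion, Set.mem_univ, iff_true, Set.mem_setOf_eq]
    obtain ⟨i, hi⟩ := hval 0 ω
    exact ⟨i, hi.symm⟩
  have hp1 : ∑ i, p i = 1 := by
    have h1 : ∑ i, P {ω | ξ 0 ω = γ i} = 1 := by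
      rw [← tsum_fintype (L := SummationFilter.unconditional _), ← measure_iUnion hEdisj hEmeas, hEcover, measure_univ]
    have h2 : ∑ i, p i = (∑ i, P {ω | ξ 0 ω = γ i}).toReal := by
      rw [ENNReal.toReal_sum (fun i _ => measure_ne_top P _)]
      exact Finset.sum_congr rfl fun i _ => hp i
    rw [h2, h1, ENNReal.toReal_one]
  -- the weight function ρ
  obtain ⟨ρ, hργ, hρmeas, hρnonneg⟩ :
      ∃ ρ : ℝ → ℝ, (∀ i, ρ (γ i) = p i) ∧ Measurable ρ ∧ ∀ x, 0 ≤ ρ x := by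
    refine ⟨fun x => ∑ i, if x = γ i then p i else 0, fun i => ?_, ?_, fun x => ?_⟩
    · show (∑ i', if γ i = γ i' then p i' else 0) = p i
      rw [Finset.sum_eq_single i]
      · rw [if_pos rfl]
      · intro b _ hb
        rw [if_neg fun h => hb (hγmono.injective h.symm)]
      · intro h; exact absurd (Finset.mem_univ i) h
    · refine Finset.measurable_sum _ fun i _ => ?_
      refine Measurable.ite ?_ measurable_const measurable_const
      rw [show {x : ℝ | x = γ i} = {γ i} from Set.setOf_eq_eq_singleton]
      exact measurableSet_singleton _
    · refine Finset.sum_nonneg fun i _ => ?_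
      split <;> simp [hp0 i]
  have hρξ : ∀ j ω, ρ (ξ j ω) = p (idx (ξ j ω)) := by
    intro j ω
    conv_lhs => rw [← hidx _ (hval j ω)]
    rw [hργ]
  -- expectation of g ∘ ξ 0
  have hkey : ∀ g : ℝ → ℝ, (∫ ω, g (ξ 0 ω) ∂P) = ∑ i, p i * g (γ i) := by
    intro g
    have h1 : ∀ ω, g (ξ 0 ω) =
        ∑ i, Set.indicator {ω' | ξ 0 ω' = γ i} (fun _ => g (γ i)) ω := by
      intro ω
      obtain ⟨i0, hi0⟩ := hval 0 ω
      rw [Finset.sum_eq_single i0]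
      · rw [Set.indicator_of_mem (by exact hi0.symm : ω ∈ {ω' | ξ 0 ω' = γ i0}), ← hi0]
      · intro b _ hb
        refine Set.indicator_of_notMem (fun hmem => ?_) _
        exact hb (hγmono.injective ((hi0.trans hmem) : γ i0 = γ b)).symm
      · intro h; exact absurd (Finset.mem_univ i0) h
    calc (∫ ω, g (ξ 0 ω) ∂P)
        = ∫ ω, ∑ i, Set.indicator {ω' | ξ 0 ω' = γ i} (fun _ => g (γ i)) ω ∂P :=
          integral_congr_ae (Filter.Eventually.of_forall h1)
      _ = ∑ i, ∫ ω, Set.indicator {ω' | ξ 0 ω' = γ i} (fun _ => g (γ i)) ω ∂P :=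
          integral_finset_sum _ (fun i _ => (integrable_const _).indicator (hEmeas i))
      _ = ∑ i, p i * g (γ i) := by
          refine Finset.sum_congr rfl fun i _ => ?_
          rw [integral_indicator_const _ (hEmeas i), measureReal_def, ← hp i, smul_eq_mul]
  -- the strong law of large numbers for g ∘ ξ
  have hslln : ∀ g : ℝ → ℝ, Measurable g →
      ∀ᵐ ω ∂P, Filter.Tendsto
        (fun n : ℕ => (n : ℝ)⁻¹ * ∑ j ∈ Finset.range n, g (ξ j ω))
        Filter.atTop (nhds (∑ i, p i * g (γ i))) := by
    intro g hg
    have hXmeas : ∀ j, Measurable fun ω => g (ξ j ω) := fun j => hg.comp (hmeas j)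
    have hint : Integrable (fun ω => g (ξ 0 ω)) P := by
      refine ⟨(hXmeas 0).aestronglyMeasurable, ?_⟩
      refine HasFiniteIntegral.of_bounded
        (C := Finset.univ.sup' ⟨⟨0, hN⟩, Finset.mem_univ _⟩ fun i => ‖g (γ i)‖) ?_
      refine Filter.Eventually.of_forall fun ω => ?_
      obtain ⟨i, hi⟩ := hval 0 ω
      rw [← hi]
      exact Finset.le_sup' (fun i => ‖g (γ i)‖) (Finset.mem_univ i)
    have hindep' : Pairwise (Function.onFun (IndepFun · · P) fun j ω => g (ξ j ω)) := by
      intro i j hij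
      exact (hindep.indepFun hij).comp hg hg
    have hident' : ∀ j, IdentDistrib (fun ω => g (ξ j ω)) (fun ω => g (ξ 0 ω)) P P := by
      intro j
      exact (⟨(hmeas j).aemeasurable, (hmeas 0).aemeasurable, hident j⟩ :
        IdentDistrib (ξ j) (ξ 0) P P).comp hg
    have h := strong_law_ae (fun j ω => g (ξ j ω)) hint hindep' hident'
    rw [show (P[fun ω => g (ξ 0 ω)]) = ∑ i, p i * g (γ i) from hkey g] at h
    simpa [smul_eq_mul] using h
  -- constants
  set lam : ℝ := ∑ i, p i * Real.log (γ i) with hlam_def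
  set ent : ℝ := ∑ i, p i * Real.log (p i) with hent_def
  set ε : ℝ := (ent - lam) / 3 with hε_def
  have hε : 0 < ε := by
    rw [hε_def]; simp only [hlam_def, hent_def]; linarith
  set aa : ℝ := lam + ε with haa_def
  set bb : ℝ := ent - ε with hbb_def
  set C : ℝ := (1 - q)⁻¹ with hC_def
  have hC0 : 0 ≤ C := by rw [hC_def]; exact inv_nonneg.mpr (by linarith)
  have hab : aa - bb < 0 := by rw [haa_def, hbb_def, hε_def]; linarith
  -- a.e. positivity of ρ ∘ ξ j
  have hnull : ∀ᵐ ω ∂P, ∀ j : ℕ, 0 < ρ (ξ j ω) := by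
    rw [MeasureTheory.ae_all_iff]
    intro j
    have hz : ∀ i : Fin N, p i = 0 → P (ξ j ⁻¹' {γ i}) = 0 := by
      intro i hpi
      have hmap : P (ξ j ⁻¹' {γ i}) = P {ω | ξ 0 ω = γ i} := by
        rw [hEdef i, ← Measure.map_apply (hmeas j) (measurableSet_singleton _),
            ← Measure.map_apply (hmeas 0) (measurableSet_singleton _), hident j]
      rw [hmap]
      have h0 : (P {ω | ξ 0 ω = γ i}).toReal = 0 := by rw [← hp i, hpi]
      exact (ENNReal.toReal_eq_zero_iff _).mp h0 |>.resolve_right (measure_ne_top P _)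
    rw [ae_iff]
    refine measure_mono_null (fun ω hω => ?_)
      (measure_iUnion_null fun i : Fin N => measure_iUnion_null fun hpi : p i = 0 =>
        hz i hpi)
    simp only [Set.mem_setOf_eq, not_lt] at hω
    obtain ⟨i, hi⟩ := hval j ω
    have hρval : ρ (ξ j ω) = p i := by rw [← hi, hργ]
    have hpi0 : p i = 0 := le_antisymm (by rw [← hρval]; exact hω) (hp0 i)
    exact Set.mem_iUnion.mpr ⟨i, Set.mem_iUnion.mpr ⟨hpi0, by exact hi.symm⟩⟩
  -- the two laws of large numbers
  have slln1 := hslln Real.log Real.measurable_log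
  have slln2' := hslln (fun x => Real.log (ρ x)) (Real.measurable_log.comp hρmeas)
  have slln2 : ∀ᵐ ω ∂P, Filter.Tendsto
      (fun n : ℕ => (n : ℝ)⁻¹ * ∑ j ∈ Finset.range n, Real.log (ρ (ξ j ω)))
      Filter.atTop (nhds ent) := by
    have hrw : (∑ i, p i * Real.log (ρ (γ i))) = ent := by
      rw [hent_def]
      exact Finset.sum_congr rfl fun i _ => by rw [hργ]
    rw [hrw] at slln2'
    exact slln2'
  -- summability of the partial products
  have hsumω : ∀ ω, Summable fun k => ∏ j ∈ Finset.range k, ξ j ω := fun ω =>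
    aux_summable hq0.le hq1 (fun j => ξ j ω) (fun j => hξpos j ω) (fun j => hξle j ω)
  -- measurability of Y
  have hYmeas : Measurable Y := by
    have htend : ∀ ω, Filter.Tendsto
        (fun n => ∑ k ∈ Finset.range n, ∏ j ∈ Finset.range k, ξ j ω)
        Filter.atTop (nhds (Y ω)) := by
      intro ω
      rw [hY ω]
      exact (hsumω ω).hasSum.tendsto_sum_nat
    exact measurable_of_tendsto_metrizable
      (fun n => Finset.measurable_sum _ fun k _ =>
        Finset.measurable_prod _ fun j _ => hmeas j)
      (tendsto_pi_nhds.mpr htend)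
  -- a.e., Y ω is eventually in the covering sets
  have hYlim : ∀ᵐ ω ∂P, Y ω ∈ Filter.limsup (auxA γ p aa bb C) Filter.atTop := by
    filter_upwards [slln1, slln2, hnull] with ω h1 h2 h3
    have hev1 : ∀ᶠ n : ℕ in Filter.atTop,
        (n : ℝ)⁻¹ * ∑ j ∈ Finset.range n, Real.log (ξ j ω) < aa :=
      h1.eventually_lt_const (by rw [haa_def]; linarith)
    have hev2 : ∀ᶠ n : ℕ in Filter.atTop,
        bb < (n : ℝ)⁻¹ * ∑ j ∈ Finset.range n, Real.log (ρ (ξ j ω)) :=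
      h2.eventually_const_lt (by rw [hbb_def]; linarith)
    have hev : ∀ᶠ n : ℕ in Filter.atTop, Y ω ∈ auxA γ p aa bb C n := by
      filter_upwards [hev1, hev2, Filter.eventually_gt_atTop 0] with n hn1 hn2 hn0
      have hnpos : (0 : ℝ) < n := by exact_mod_cast hn0
      have hprod1 : ∏ j ∈ Finset.range n, ξ j ω ≤ Real.exp (n * aa) := by
        have hlt : ∑ j ∈ Finset.range n, Real.log (ξ j ω) < n * aa := by
          have := (mul_lt_mul_iff_right₀ hnpos).mpr hn1
          rwa [← mul_assoc, mul_inv_cancel₀ hnpos.ne', one_mul] at this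
        calc ∏ j ∈ Finset.range n, ξ j ω
            = Real.exp (∑ j ∈ Finset.range n, Real.log (ξ j ω)) := by
              rw [Real.exp_sum]
              exact Finset.prod_congr rfl fun j _ => (Real.exp_log (hξpos j ω)).symm
          _ ≤ Real.exp (n * aa) := Real.exp_le_exp.mpr hlt.le
      have hprod2 : Real.exp (n * bb) ≤ ∏ j ∈ Finset.range n, ρ (ξ j ω) := by
        have hlt : (n : ℝ) * bb < ∑ j ∈ Finset.range n, Real.log (ρ (ξ j ω)) := by
          have := (mul_lt_mul_iff_right₀ hnpos).mpr hn2
          rwa [← mul_assoc, mul_inv_cancel₀ hnpos.ne', one_mul] at this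
        calc Real.exp (n * bb) ≤
            Real.exp (∑ j ∈ Finset.range n, Real.log (ρ (ξ j ω))) :=
              Real.exp_le_exp.mpr hlt.le
          _ = ∏ j ∈ Finset.range n, ρ (ξ j ω) := by
              rw [Real.exp_sum]
              exact Finset.prod_congr rfl fun j _ => Real.exp_log (h3 j)
      set w : Fin n → Fin N := fun j => idx (ξ j ω) with hw_def
      have hxw : ∀ j : Fin n, ξ j ω = γ (w j) := fun j =>
        (hidx _ (hval j ω)).symm
      have hpw : ∏ j, p (w j) = ∏ j ∈ Finset.range n, ρ (ξ j ω) := by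
        rw [← Fin.prod_univ_eq_prod_range (fun j => ρ (ξ j ω)) n]
        refine Finset.prod_congr rfl fun j _ => ?_
        rw [hρξ j ω]
      rw [hY ω]
      exact auxA_mem γ p hq0.le hq1 hC_def (fun j => ξ j ω) w hxw
        (fun j => hξpos j ω) (fun j => hξle j ω) hprod1 (by rw [hpw]; exact hprod2)
    exact Filter.mem_limsup_iff_frequently_mem.mpr hev.frequently
  -- the limsup has Lebesgue measure zero
  have hlimMeas : MeasurableSet (Filter.limsup (auxA γ p aa bb C) Filter.atTop) := by
    rw [Filter.limsup_eq_iInf_iSup_of_nat]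
    exact MeasurableSet.iInter fun n => MeasurableSet.iUnion fun m =>
      MeasurableSet.iUnion fun _ => auxA_measurable γ p aa bb C m
  have hvol : volume (Filter.limsup (auxA γ p aa bb C) Filter.atTop) = 0 := by
    apply measure_limsup_atTop_eq_zero
    set r : ℝ := Real.exp (aa - bb) with hr_def
    have hr0 : 0 < r := Real.exp_pos _
    have hr1 : r < 1 := Real.exp_lt_one_iff.mpr hab
    have hsumr : Summable fun n : ℕ => C * r ^ n :=
      (summable_geometric_of_lt_one hr0.le hr1).mul_left C
    have hle : ∑' n, volume (auxA γ p aa bb C n)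
        ≤ ENNReal.ofReal (∑' n : ℕ, C * r ^ n) := by
      rw [ENNReal.ofReal_tsum_of_nonneg (fun n => by positivity) hsumr]
      exact ENNReal.tsum_le_tsum fun n => auxA_volume γ p aa bb C n hp0 hp1 hC0
    exact ne_top_of_le_ne_top ENNReal.ofReal_ne_top hle
  -- conclusion
  refine ⟨(Filter.limsup (auxA γ p aa bb C) Filter.atTop)ᶜ, hlimMeas.compl, ?_, ?_⟩
  · rw [Measure.map_apply hYmeas hlimMeas.compl]
    have : P {ω | ¬ Y ω ∈ Filter.limsup (auxA γ p aa bb C) Filter.atTop} = 0 :=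
      ae_iff.mp hYlim
    exact this
  · rw [compl_compl]
    exact hvol
end

section
/- Let (X_j)_{j≥1} be i.i.d. with P(X_1 = ±1) = 1/2, S_k = X_1 + ... + X_k, ν > 1, and Y = Σ_{k≥0} exp(S_k − kν). Then the distribution of Y is singular with respect to Lebesgue measure. -/
open MeasureTheory ProbabilityTheory Finset ENNReal

namespace Stmt5Aux

noncomputable def sg (b : Bool) : ℝ := if b then 1 else -1

noncomputable def extv (n : ℕ) (s : Fin n → Bool) (j : ℕ) : ℝ :=
  if h : j < n then sg (s ⟨j, h⟩) else 0

noncomputable def Tf (ν : ℝ) (n : ℕ) (s : Fin n → Bool) : ℝ :=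
  ∑ k ∈ Finset.range n, Real.exp ((∑ j ∈ Finset.range k, extv n s j) - k * ν)

noncomputable def sig (n : ℕ) (s : Fin n → Bool) : ℝ := ∑ j ∈ Finset.range n, extv n s j

noncomputable def M0 (ν : ℝ) : ℝ := (1 - Real.exp (1 - ν))⁻¹

noncomputable def filt (ε : ℝ) (n : ℕ) : Finset (Fin n → Bool) :=
  Finset.univ.filter (fun s : Fin n → Bool => sig n s ≤ ε * n)

noncomputable def En (ν ε : ℝ) (n : ℕ) : Set ℝ :=
  ⋃ s ∈ filt ε n,
    Set.Icc (Tf ν n s) (Tf ν n s + Real.exp (sig n s - n * ν) * M0 ν)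

noncomputable def Aset (ν ε : ℝ) : Set ℝ := ⋃ N : ℕ, ⋂ (n : ℕ) (_ : N ≤ n), En ν ε n

lemma measurableSet_En (ν ε : ℝ) (n : ℕ) : MeasurableSet (En ν ε n) :=
  (filt ε n).measurableSet_biUnion (fun _ _ => measurableSet_Icc)

lemma measurableSet_Aset (ν ε : ℝ) : MeasurableSet (Aset ν ε) :=
  MeasurableSet.iUnion fun _ => MeasurableSet.iInter fun n =>
    MeasurableSet.iInter fun _ => measurableSet_En ν ε n

lemma M0_pos {ν : ℝ} (hν : 1 < ν) : 0 < M0 ν := by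
  have h : Real.exp (1 - ν) < 1 := by
    rw [Real.exp_lt_one_iff]; linarith
  have : 0 < 1 - Real.exp (1 - ν) := by linarith
  exact inv_pos.2 this

lemma volume_En_le {ν : ℝ} (hν : 1 < ν) (ε : ℝ) (n : ℕ) :
    volume (En ν ε n) ≤ ENNReal.ofReal ((2 * Real.exp (ε - ν)) ^ n * M0 ν) := by
  have hM := (M0_pos hν).le
  calc volume (En ν ε n)
      ≤ ∑ s ∈ filt ε n, volume
          (Set.Icc (Tf ν n s) (Tf ν n s + Real.exp (sig n s - n * ν) * M0 ν)) :=
        measure_biUnion_finset_le _ _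
    _ ≤ ∑ s ∈ filt ε n, ENNReal.ofReal (Real.exp ((ε - ν) * n) * M0 ν) := by
        refine Finset.sum_le_sum fun s hs => ?_
        rw [Real.volume_Icc]
        have hσ : sig n s ≤ ε * n := (Finset.mem_filter.1 hs).2
        have : Real.exp (sig n s - n * ν) ≤ Real.exp ((ε - ν) * n) := by
          apply Real.exp_le_exp.2; ring_nf; nlinarith
        refine ENNReal.ofReal_le_ofReal ?_
        have := mul_le_mul_of_nonneg_right this hM
        linarith
    _ ≤ (2 ^ n : ℕ) • ENNReal.ofReal (Real.exp ((ε - ν) * n) * M0 ν) := by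
        rw [Finset.sum_const, nsmul_eq_mul, nsmul_eq_mul]
        refine mul_le_mul_left ?_ _
        refine Nat.cast_le.2 ?_
        calc (filt ε n).card ≤ (Finset.univ : Finset (Fin n → Bool)).card :=
              Finset.card_le_card (Finset.filter_subset _ _)
          _ = 2 ^ n := by simp
    _ = ENNReal.ofReal ((2 * Real.exp (ε - ν)) ^ n * M0 ν) := by
        rw [nsmul_eq_mul]
        rw [← ENNReal.ofReal_natCast, ← ENNReal.ofReal_mul (by positivity)]
        congr 1
        rw [mul_pow, ← Real.exp_nat_mul]
        push_cast
        ring_nf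

lemma volume_Aset {ν ε : ℝ} (hν : 1 < ν) (hr : 2 * Real.exp (ε - ν) < 1) :
    volume (Aset ν ε) = 0 := by
  have hb : Filter.Tendsto (fun n : ℕ => ENNReal.ofReal ((2 * Real.exp (ε - ν)) ^ n * M0 ν))
      Filter.atTop (nhds 0) := by
    have h1 : Filter.Tendsto (fun n : ℕ => (2 * Real.exp (ε - ν)) ^ n * M0 ν)
        Filter.atTop (nhds 0) := by
      have := tendsto_pow_atTop_nhds_zero_of_lt_one (by positivity) hr
      simpa using this.mul_const (M0 ν)
    have := (ENNReal.continuous_ofReal.tendsto 0).comp h1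
    simpa [Function.comp_def] using this
  rw [Aset]
  refine measure_iUnion_null fun N => ?_
  refine le_antisymm ?_ (zero_le)
  refine ge_of_tendsto hb ?_
  filter_upwards [Filter.eventually_ge_atTop N] with n hn
  calc volume (⋂ (m : ℕ) (_ : N ≤ m), En ν ε m) ≤ volume (En ν ε n) :=
        measure_mono (Set.biInter_subset_of_mem hn)
    _ ≤ _ := volume_En_le hν ε n

lemma summable_f {ν : ℝ} (hν : 1 < ν) {a : ℕ → ℝ} (ha : ∀ j, |a j| ≤ 1) :
    Summable (fun k : ℕ => Real.exp ((∑ j ∈ Finset.range k, a j) - k * ν)) := by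
  have hr0 : (0:ℝ) ≤ Real.exp (1 - ν) := (Real.exp_pos _).le
  have hr1 : Real.exp (1 - ν) < 1 := by rw [Real.exp_lt_one_iff]; linarith
  refine Summable.of_nonneg_of_le (fun k => (Real.exp_pos _).le) (fun k => ?_)
    (summable_geometric_of_lt_one hr0 hr1)
  have hS : (∑ j ∈ Finset.range k, a j) ≤ k := by
    calc (∑ j ∈ Finset.range k, a j) ≤ ∑ j ∈ Finset.range k, (1:ℝ) :=
          Finset.sum_le_sum fun j _ => (abs_le.1 (ha j)).2
      _ = k := by simp
  rw [← Real.exp_nat_mul]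
  apply Real.exp_le_exp.2
  nlinarith [Nat.cast_nonneg (α := ℝ) k]

lemma tsum_mem_En {ν ε : ℝ} (hν : 1 < ν) {a : ℕ → ℝ} (ha : ∀ j, a j = 1 ∨ a j = -1)
    {n : ℕ} (hn : (∑ j ∈ Finset.range n, a j) ≤ ε * n) :
    (∑' k : ℕ, Real.exp ((∑ j ∈ Finset.range k, a j) - k * ν)) ∈ En ν ε n := by
  classical
  have habs : ∀ j, |a j| ≤ 1 := fun j => by rcases ha j with h | h <;> simp [h]
  set f : ℕ → ℝ := fun k => Real.exp ((∑ j ∈ Finset.range k, a j) - k * ν) with hf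
  have hsum : Summable f := summable_f hν habs
  set s : Fin n → Bool := fun i => if a i.1 = 1 then true else false with hs
  have hext : ∀ j, j < n → extv n s j = a j := by
    intro j hj
    rw [extv, dif_pos hj]
    rcases ha j with h | h
    · simp [hs, sg, h]
    · have h1 : a j ≠ 1 := by rw [h]; norm_num
      simp [hs, sg, h, h1]
      intro hx
      exact absurd hx (by norm_num)
  have hsig : sig n s = ∑ j ∈ Finset.range n, a j :=
    Finset.sum_congr rfl fun j hj => hext j (Finset.mem_range.1 hj)
  have hTf : Tf ν n s = ∑ k ∈ Finset.range n, f k := by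
    refine Finset.sum_congr rfl fun k hk => ?_
    have : (∑ j ∈ Finset.range k, extv n s j) = ∑ j ∈ Finset.range k, a j :=
      Finset.sum_congr rfl fun j hj =>
        hext j (lt_trans (Finset.mem_range.1 hj) (Finset.mem_range.1 hk))
    rw [this]
  have hsplit : (∑ k ∈ Finset.range n, f k) + (∑' m : ℕ, f (m + n)) = ∑' k, f k :=
    Summable.sum_add_tsum_nat_add n hsum
  have htail_nonneg : 0 ≤ ∑' m : ℕ, f (m + n) := tsum_nonneg fun m => (Real.exp_pos _).le
  have hr0 : (0:ℝ) ≤ Real.exp (1 - ν) := (Real.exp_pos _).le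
  have hr1 : Real.exp (1 - ν) < 1 := by rw [Real.exp_lt_one_iff]; linarith
  have htail_le : (∑' m : ℕ, f (m + n)) ≤
      Real.exp ((∑ j ∈ Finset.range n, a j) - n * ν) * M0 ν := by
    have hgeo : Summable (fun m : ℕ =>
        Real.exp ((∑ j ∈ Finset.range n, a j) - n * ν) * Real.exp (1 - ν) ^ m) :=
      (summable_geometric_of_lt_one hr0 hr1).mul_left _
    have hle : ∀ m : ℕ, f (m + n) ≤
        Real.exp ((∑ j ∈ Finset.range n, a j) - n * ν) * Real.exp (1 - ν) ^ m := by
      intro m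
      rw [hf]
      simp only []
      rw [← Real.exp_nat_mul, ← Real.exp_add]
      apply Real.exp_le_exp.2
      have hIc : (∑ j ∈ Finset.range (m + n), a j) ≤ (∑ j ∈ Finset.range n, a j) + m := by
        rw [add_comm m n, Finset.sum_range_add]
        have h2 : (∑ j ∈ Finset.range m, a (n + j)) ≤ ∑ j ∈ Finset.range m, (1:ℝ) :=
          Finset.sum_le_sum fun j _ => (abs_le.1 (habs _)).2
        simp only [Finset.sum_const, Finset.card_range, nsmul_eq_mul, mul_one] at h2
        linarith
      push_cast
      nlinarith [Nat.cast_nonneg (α := ℝ) m, Nat.cast_nonneg (α := ℝ) n]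
    calc (∑' m : ℕ, f (m + n)) ≤ _ :=
          Summable.tsum_le_tsum hle ((summable_nat_add_iff n).2 hsum) hgeo
      _ = Real.exp ((∑ j ∈ Finset.range n, a j) - n * ν) * M0 ν := by
          rw [tsum_mul_left, tsum_geometric_of_lt_one hr0 hr1, M0]
  refine Set.mem_biUnion (x := s) ?_ ?_
  · show s ∈ filt ε n
    exact Finset.mem_filter.2 ⟨Finset.mem_univ _, by rw [hsig]; exact hn⟩
  · rw [hsig, hTf]
    constructor
    · linarith
    · linarith

end Stmt5Aux

open Stmt5Aux

/-- Let `(X j)` be i.i.d. with `P(X = ±1) = 1/2`,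
`S k = X 1 + ⋯ + X k`, `ν > 1` and `Y = ∑_{k≥0} exp (S k - k ν)`.  Then the
distribution of `Y` is singular with respect to Lebesgue measure. -/
theorem stmt5_rw_exponential_functional_singular
    {Ω : Type*} [MeasurableSpace Ω] (P : Measure Ω) [IsProbabilityMeasure P]
    (X : ℕ → Ω → ℝ)
    (hmeas : ∀ j, Measurable (X j))
    (hindep : iIndepFun X P)
    (hlaw : ∀ j, Measure.map (X j) P =
      (1/2 : ℝ≥0∞) • Measure.dirac (1 : ℝ) + (1/2 : ℝ≥0∞) • Measure.dirac (-1 : ℝ))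
    (ν : ℝ) (hν : 1 < ν)
    (Y : Ω → ℝ)
    (hY : ∀ ω, Y ω = ∑' k : ℕ,
      Real.exp ((∑ j ∈ Finset.range k, X j ω) - k * ν)) :
    (Measure.map Y P) ⟂ₘ (volume : Measure ℝ) := by
  classical
  set ε : ℝ := (ν - Real.log 2) / 2 with hε
  have hlog2 : Real.log 2 < 1 := by
    have := Real.log_two_lt_d9
    linarith
  have hεpos : 0 < ε := by rw [hε]; linarith
  have hr : 2 * Real.exp (ε - ν) < 1 := by
    have h2 : (2:ℝ) = Real.exp (Real.log 2) := (Real.exp_log (by norm_num)).symm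
    calc 2 * Real.exp (ε - ν) = Real.exp (Real.log 2 + (ε - ν)) := by
          rw [Real.exp_add, ← h2]
      _ < Real.exp 0 := by
          apply Real.exp_lt_exp.2
          rw [hε]; linarith
      _ = 1 := Real.exp_zero
  -- a.e. each X j is ±1
  have hsigns : ∀ᵐ ω ∂P, ∀ j, X j ω = 1 ∨ X j ω = -1 := by
    rw [ae_all_iff]
    intro j
    have hset : MeasurableSet ({1, -1} : Set ℝ) :=
      ((Set.finite_singleton _).insert _).measurableSet
    have h0 : P (X j ⁻¹' ({1, -1} : Set ℝ)ᶜ) = 0 := by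
      have hmap := Measure.map_apply (μ := P) (hmeas j) hset.compl
      rw [hlaw j] at hmap
      rw [← hmap]
      have hd1 : Measure.dirac (1:ℝ) ({1, -1} : Set ℝ)ᶜ = 0 := by
        rw [Measure.dirac_apply' _ hset.compl]
        simp
      have hd2 : Measure.dirac (-1:ℝ) ({1, -1} : Set ℝ)ᶜ = 0 := by
        rw [Measure.dirac_apply' _ hset.compl]
        simp
      simp [hd1, hd2]
    have hsets : {ω | ¬(X j ω = 1 ∨ X j ω = -1)} = X j ⁻¹' ({1, -1} : Set ℝ)ᶜ := by
      ext ω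
      simp [Set.mem_preimage]
    rw [ae_iff, hsets]
    exact h0
  -- integrability and mean zero
  have hint : Integrable (X 0) P := by
    refine (integrable_const (1:ℝ)).mono' (hmeas 0).aestronglyMeasurable ?_
    filter_upwards [hsigns] with ω hω
    rcases hω 0 with h | h <;> simp [h]
  have hid : Integrable (fun x : ℝ => x) (Measure.dirac (1:ℝ)) :=
    (integrable_congr (ae_eq_dirac (fun x : ℝ => x))).2 (integrable_const _)
  have hid2 : Integrable (fun x : ℝ => x) (Measure.dirac (-1:ℝ)) :=
    (integrable_congr (ae_eq_dirac (fun x : ℝ => x))).2 (integrable_const _)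
  have hi1 : Integrable (fun x : ℝ => x) ((1/2 : ℝ≥0∞) • Measure.dirac (1:ℝ)) :=
    (integrable_smul_measure (by norm_num) (by norm_num)).2 hid
  have hi2 : Integrable (fun x : ℝ => x) ((1/2 : ℝ≥0∞) • Measure.dirac (-1:ℝ)) :=
    (integrable_smul_measure (by norm_num) (by norm_num)).2 hid2
  have hmean : (∫ ω, X 0 ω ∂P) = 0 := by
    have h1 : (∫ ω, X 0 ω ∂P) = ∫ x, x ∂(Measure.map (X 0) P) :=
      (integral_map (hmeas 0).aemeasurable aestronglyMeasurable_id).symm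
    rw [h1, hlaw 0]
    rw [integral_add_measure hi1 hi2]
    rw [integral_smul_measure, integral_smul_measure, integral_dirac, integral_dirac]
    norm_num [ENNReal.toReal_div]
  -- strong law
  have hindep2 : Pairwise (Function.onFun (IndepFun · · P) X) := fun i j hij => hindep.indepFun hij
  have hident : ∀ i, IdentDistrib (X i) (X 0) P P := fun i =>
    ⟨(hmeas i).aemeasurable, (hmeas 0).aemeasurable, by rw [hlaw i, hlaw 0]⟩
  have hslln := strong_law_ae_real X hint hindep2 hident
  -- a.e., Y ∈ Aset
  have hae : ∀ᵐ ω ∂P, Y ω ∈ Aset ν ε := by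
    filter_upwards [hsigns, hslln] with ω hω hT
    rw [hmean] at hT
    have hev : ∀ᶠ n : ℕ in Filter.atTop, (∑ j ∈ Finset.range n, X j ω) ≤ ε * n := by
      have h1 : ∀ᶠ n : ℕ in Filter.atTop,
          (∑ j ∈ Finset.range n, X j ω) / n < ε := hT.eventually_lt_const hεpos
      filter_upwards [h1, Filter.eventually_gt_atTop 0] with n h2 h3
      have hn0 : (0:ℝ) < n := by exact_mod_cast h3
      calc (∑ j ∈ Finset.range n, X j ω)
          = ((∑ j ∈ Finset.range n, X j ω) / n) * n := by field_simp
        _ ≤ ε * n := mul_le_mul_of_nonneg_right h2.le hn0.le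
    obtain ⟨N, hN⟩ := Filter.eventually_atTop.1 hev
    refine Set.mem_iUnion.2 ⟨N, ?_⟩
    refine Set.mem_iInter.2 fun n => Set.mem_iInter.2 fun hn => ?_
    rw [hY ω]
    exact tsum_mem_En hν hω (hN n hn)
  -- Y is a.e. measurable
  have hYm : AEMeasurable Y P := by
    have hfm : ∀ k : ℕ, Measurable (fun ω =>
        Real.exp ((∑ j ∈ Finset.range k, X j ω) - k * ν)) := fun k =>
      ((Finset.measurable_sum (Finset.range k) fun j _ => hmeas j).sub
        measurable_const).exp
    refine ⟨fun ω => (∑' k : ℕ, ENNReal.ofReal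
        (Real.exp ((∑ j ∈ Finset.range k, X j ω) - k * ν))).toReal, ?_, ?_⟩
    · exact (Measurable.ennreal_tsum fun k => (hfm k).ennreal_ofReal).ennreal_toReal
    · filter_upwards [hsigns] with ω hω
      have habs : ∀ j, |X j ω| ≤ 1 := fun j => by rcases hω j with h | h <;> simp [h]
      have hsum := summable_f hν (a := fun j => X j ω) habs
      rw [hY ω, ← ENNReal.ofReal_tsum_of_nonneg (fun k => (Real.exp_pos _).le) hsum,
        ENNReal.toReal_ofReal (tsum_nonneg fun k => (Real.exp_pos _).le)]
  -- conclude
  refine ⟨(Aset ν ε)ᶜ, (measurableSet_Aset ν ε).compl, ?_, ?_⟩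
  · rw [Measure.map_apply_of_aemeasurable hYm (measurableSet_Aset ν ε).compl]
    rw [ae_iff] at hae
    exact hae
  · rw [compl_compl]
    exact volume_Aset hν hr
end

section
/- Let (ξ_j)_{j≥1} be i.i.d. positive with μ_p = E(ξ_1^p) < 1 for an integer p ≥ 1, and Y = Σ_{k≥0} ξ_1···ξ_k. Then the moments of Y satisfy the recursion E(Y^p) = (1 − μ_p)^{-1} Σ_{k=0}^{p−1} C(p,k) μ_k E(Y^k), where μ_k = E(ξ_1^k) and μ_0 = 1. -/
open MeasureTheory ProbabilityTheory Finset ENNReal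

set_option linter.unusedSectionVars false
set_option linter.unusedVariables false
set_option linter.deprecated false

namespace Stmt8Aux

variable {Ω : Type*} [MeasurableSpace Ω] (P : Measure Ω) [IsProbabilityMeasure P]

/-- Partial sums of the shifted perpetuity series. -/
noncomputable def SS (ξ : ℕ → Ω → ℝ) (n N : ℕ) (ω : Ω) : ℝ≥0∞ :=
  ∑ k ∈ Finset.range N, ∏ j ∈ Finset.range k, ENNReal.ofReal (ξ (n + j) ω)

variable {ξ : ℕ → Ω → ℝ}

lemma meas_SS' (hmeas : ∀ j, Measurable (ξ j)) (n N : ℕ) : Measurable (SS ξ n N) := by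
  unfold SS
  exact Finset.measurable_sum _ fun k _ =>
    Finset.measurable_prod _ fun j _ => (hmeas (n + j)).ennreal_ofReal

lemma SS_succ' (n N : ℕ) (ω : Ω) :
    SS ξ n (N + 1) ω = 1 + ENNReal.ofReal (ξ n ω) * SS ξ (n + 1) N ω := by
  unfold SS
  rw [Finset.sum_range_succ']
  simp only [Finset.range_zero, Finset.prod_empty]
  rw [add_comm, Finset.mul_sum]
  congr 1
  refine Finset.sum_congr rfl fun k _ => ?_
  rw [Finset.prod_range_succ']
  rw [mul_comm]
  congr 1
  refine Finset.prod_congr rfl fun j _ => ?_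
  congr 2
  omega

lemma SS_mono' (n : ℕ) (ω : Ω) : Monotone fun N => SS ξ n N ω := by
  intro N M h
  exact Finset.sum_le_sum_of_subset (Finset.range_subset_range.2 h)

/-- moments of individual factors don't depend on the index. -/
lemma mu_shift' (hmeas : ∀ j, Measurable (ξ j))
    (hident : ∀ j, Measure.map (ξ j) P = Measure.map (ξ 0) P) (n k : ℕ) :
    ∫⁻ ω, ENNReal.ofReal (ξ n ω) ^ k ∂P = ∫⁻ ω, ENNReal.ofReal (ξ 0 ω) ^ k ∂P := by
  have hm : Measurable fun x : ℝ => ENNReal.ofReal x ^ k :=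
    measurable_id.ennreal_ofReal.pow_const k
  rw [← lintegral_map hm (hmeas n), hident n, lintegral_map hm (hmeas 0)]


lemma indep_step' (hmeas : ∀ j, Measurable (ξ j))
    (hindep : iIndepFun ξ P)
    (n N k : ℕ) :
    IndepFun (fun ω => ENNReal.ofReal (ξ n ω) ^ k) (fun ω => (SS ξ (n + 1) N ω) ^ k) P := by
  classical
  set T : Finset ℕ := Finset.image (fun j => n + 1 + j) (Finset.range N) with hT
  have hdisj : Disjoint ({n} : Finset ℕ) T := by
    simp only [Finset.disjoint_singleton_left, hT, Finset.mem_image, Finset.mem_range]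
    rintro ⟨j, -, hj⟩; omega
  have hbase := hindep.indepFun_finset {n} T hdisj hmeas
  set φ : (({n} : Finset ℕ) → ℝ) → ℝ≥0∞ := fun v =>
    ENNReal.ofReal (v ⟨n, Finset.mem_singleton_self n⟩) ^ k with hφ
  set ψ : (↥T → ℝ) → ℝ≥0∞ := fun v =>
    (∑ m ∈ Finset.range N, ∏ j ∈ Finset.range m,
      ENNReal.ofReal (if h : (n + 1 + j) ∈ T then v ⟨n + 1 + j, h⟩ else 0)) ^ k with hψ
  have hφm : Measurable φ := ((measurable_pi_apply _).ennreal_ofReal).pow_const k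
  have hψm : Measurable ψ := by
    apply Measurable.pow_const
    apply Finset.measurable_sum _ fun m _ => ?_
    apply Finset.measurable_prod _ fun j _ => ?_
    by_cases h : (n + 1 + j) ∈ T
    · simp only [dif_pos h]
      exact (measurable_pi_apply _).ennreal_ofReal
    · simp only [dif_neg h]
      exact measurable_const
  have := hbase.comp hφm hψm
  have h1 : (φ ∘ fun a (i : ({n} : Finset ℕ)) => ξ i a) =
      fun ω => ENNReal.ofReal (ξ n ω) ^ k := rfl
  have h2 : (ψ ∘ fun a (i : ↥T) => ξ i a) =
      fun ω => (SS ξ (n + 1) N ω) ^ k := by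
    funext ω
    simp only [Function.comp_apply, hψ, SS]
    congr 1
    refine Finset.sum_congr rfl fun m hm => Finset.prod_congr rfl fun j hj => ?_
    have hmem : (n + 1 + j) ∈ T := by
      simp only [hT, Finset.mem_image, Finset.mem_range]
      exact ⟨j, by simp at hm hj; omega, rfl⟩
    rw [dif_pos hmem]
  rwa [h1, h2] at this


lemma main_step' (hmeas : ∀ j, Measurable (ξ j))
    (hindep : iIndepFun ξ P)
    (hident : ∀ j, Measure.map (ξ j) P = Measure.map (ξ 0) P)
    (μ : ℕ → ℝ≥0∞) (hμ : ∀ k, μ k = ∫⁻ ω, (ENNReal.ofReal (ξ 0 ω)) ^ k ∂P)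
    (n N p : ℕ) :
    ∫⁻ ω, (SS ξ n (N + 1) ω) ^ p ∂P =
      ∑ k ∈ Finset.range (p + 1),
        (p.choose k : ℝ≥0∞) * μ k * ∫⁻ ω, (SS ξ (n + 1) N ω) ^ k ∂P := by
  have hpt : ∀ ω, (SS ξ n (N + 1) ω) ^ p =
      ∑ k ∈ Finset.range (p + 1),
        (p.choose k : ℝ≥0∞) * (ENNReal.ofReal (ξ n ω) ^ k * (SS ξ (n + 1) N ω) ^ k) := by
    intro ω
    rw [SS_succ', add_comm, add_pow]
    refine Finset.sum_congr rfl fun k _ => ?_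
    rw [mul_pow, one_pow, mul_one]
    ring
  calc ∫⁻ ω, (SS ξ n (N + 1) ω) ^ p ∂P
      = ∫⁻ ω, ∑ k ∈ Finset.range (p + 1),
          (p.choose k : ℝ≥0∞) * (ENNReal.ofReal (ξ n ω) ^ k * (SS ξ (n + 1) N ω) ^ k) ∂P := by
        exact lintegral_congr hpt
    _ = ∑ k ∈ Finset.range (p + 1), ∫⁻ ω,
          (p.choose k : ℝ≥0∞) * (ENNReal.ofReal (ξ n ω) ^ k * (SS ξ (n + 1) N ω) ^ k) ∂P := by
        refine lintegral_finset_sum _ fun k _ => ?_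
        exact (measurable_const.mul ((((hmeas n).ennreal_ofReal).pow_const k).mul
          ((meas_SS' hmeas (n+1) N).pow_const k)))
    _ = ∑ k ∈ Finset.range (p + 1),
          (p.choose k : ℝ≥0∞) * μ k * ∫⁻ ω, (SS ξ (n + 1) N ω) ^ k ∂P := by
        refine Finset.sum_congr rfl fun k _ => ?_
        rw [lintegral_const_mul (f := fun ω => ENNReal.ofReal (ξ n ω) ^ k * (SS ξ (n + 1) N ω) ^ k)
          _ ((((hmeas n).ennreal_ofReal).pow_const k).mul
          ((meas_SS' hmeas (n+1) N).pow_const k))]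
        rw [lintegral_mul_eq_lintegral_mul_lintegral_of_indepFun''
          (((hmeas n).ennreal_ofReal).pow_const k).aemeasurable
          ((meas_SS' hmeas (n+1) N).pow_const k).aemeasurable
          (indep_step' P hmeas hindep n N k)]
        rw [mu_shift' P hmeas hident, ← hμ, mul_assoc]


lemma mu_lt_one' (hmeas : Measurable (ξ 0))
    (μ : ℕ → ℝ≥0∞) (hμ : ∀ k, μ k = ∫⁻ ω, (ENNReal.ofReal (ξ 0 ω)) ^ k ∂P)
    {p : ℕ} (hμp : μ p < 1) {k : ℕ} (hk : 1 ≤ k) (hkp : k ≤ p) : μ k < 1 := by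
  rcases eq_or_lt_of_le hkp with rfl | hkp'
  · exact hμp
  have hk0 : (0 : ℝ) < k := by exact_mod_cast hk
  have hkpr : (k : ℝ) < p := by exact_mod_cast hkp'
  have hp0 : (0 : ℝ) < p := by linarith
  set r : ℝ := (p : ℝ) / k with hr
  set q : ℝ := (p : ℝ) / ((p : ℝ) - k) with hq
  have hconj : r.HolderConjugate q := by
    rw [Real.holderConjugate_iff]; constructor
    · rw [hr]; rw [lt_div_iff₀ hk0]; linarith
    · rw [hr, hq]
      rw [inv_div, inv_div]
      field_simp
      ring
  set f : Ω → ℝ≥0∞ := fun ω => ENNReal.ofReal (ξ 0 ω) ^ k with hf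
  have hfm : AEMeasurable f P := ((hmeas.ennreal_ofReal).pow_const k).aemeasurable
  set g : Ω → ℝ≥0∞ := fun _ => 1 with hg
  have hH := ENNReal.lintegral_mul_le_Lp_mul_Lq P hconj hfm (aemeasurable_const (b := (1:ℝ≥0∞)))
  have hfr : ∀ ω, f ω ^ r = ENNReal.ofReal (ξ 0 ω) ^ p := by
    intro ω
    show (ENNReal.ofReal (ξ 0 ω) ^ k) ^ r = _
    rw [← ENNReal.rpow_natCast _ k, ← ENNReal.rpow_mul]
    have : (k : ℝ) * r = (p : ℕ) := by rw [hr]; field_simp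
    rw [this, ENNReal.rpow_natCast]
  have h1 : ∫⁻ ω, (f * g) ω ∂P = μ k := by
    simp only [Pi.mul_apply, hg, mul_one, hμ, hf]
  have h2 : ∫⁻ ω, f ω ^ r ∂P = μ p := by
    rw [hμ]; exact lintegral_congr hfr
  rw [h1, h2] at hH
  simp only [hg, ENNReal.one_rpow, lintegral_one, measure_univ, mul_one] at hH
  calc μ k ≤ μ p ^ (1 / r) := hH
    _ < 1 := ENNReal.rpow_lt_one hμp (by rw [hr]; positivity)

lemma mu_zero (μ : ℕ → ℝ≥0∞) (hμ : ∀ k, μ k = ∫⁻ ω, (ENNReal.ofReal (ξ 0 ω)) ^ k ∂P) :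
    μ 0 = 1 := by simp [hμ 0]


lemma ennreal_key {m C : ℝ≥0∞} (hm : m < 1) :
    m * (C * (1 - m)⁻¹) + C = C * (1 - m)⁻¹ := by
  have hd0 : (1 : ℝ≥0∞) - m ≠ 0 := (tsub_pos_of_lt hm).ne'
  have hdt : (1 : ℝ≥0∞) - m ≠ ⊤ := ne_top_of_le_ne_top one_ne_top tsub_le_self
  have hdd : ((1 : ℝ≥0∞) - m) * (1 - m)⁻¹ = 1 := ENNReal.mul_inv_cancel hd0 hdt
  have hsum : m + (1 - m) = 1 := add_tsub_cancel_of_le hm.le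
  have h2 : m * (1 - m)⁻¹ + 1 = (1 - m)⁻¹ := by
    calc m * (1 - m)⁻¹ + 1 = m * (1 - m)⁻¹ + (1 - m) * (1 - m)⁻¹ := by rw [hdd]
      _ = (m + (1 - m)) * (1 - m)⁻¹ := by rw [add_mul]
      _ = 1 * (1 - m)⁻¹ := by rw [hsum]
      _ = (1 - m)⁻¹ := one_mul _
  calc m * (C * (1 - m)⁻¹) + C = C * (m * (1 - m)⁻¹ + 1) := by ring
    _ = C * (1 - m)⁻¹ := by rw [h2]

lemma shift_inv' (hmeas : ∀ j, Measurable (ξ j))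
    (hindep : iIndepFun ξ P)
    (hident : ∀ j, Measure.map (ξ j) P = Measure.map (ξ 0) P)
    (μ : ℕ → ℝ≥0∞) (hμ : ∀ k, μ k = ∫⁻ ω, (ENNReal.ofReal (ξ 0 ω)) ^ k ∂P) :
    ∀ N n k, ∫⁻ ω, (SS ξ n N ω) ^ k ∂P = ∫⁻ ω, (SS ξ 0 N ω) ^ k ∂P := by
  intro N
  induction N with
  | zero =>
    intro n k
    refine lintegral_congr fun ω => ?_
    simp [SS]
  | succ N IH =>
    intro n k
    rw [main_step' P hmeas hindep hident μ hμ n N k,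
      main_step' P hmeas hindep hident μ hμ 0 N k]
    exact Finset.sum_congr rfl fun j _ => by rw [IH (n + 1) j, IH 1 j]

lemma bound' (hmeas : ∀ j, Measurable (ξ j))
    (hindep : iIndepFun ξ P)
    (hident : ∀ j, Measure.map (ξ j) P = Measure.map (ξ 0) P)
    (μ : ℕ → ℝ≥0∞) (hμ : ∀ k, μ k = ∫⁻ ω, (ENNReal.ofReal (ξ 0 ω)) ^ k ∂P)
    {p : ℕ} (hμp : μ p < 1) :
    ∀ k, k ≤ p → ∃ B : ℝ≥0∞, B ≠ ⊤ ∧ ∀ N, ∫⁻ ω, (SS ξ 0 N ω) ^ k ∂P ≤ B := by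
  intro k
  induction k using Nat.strong_induction_on with
  | _ k IH =>
    intro hkp
    have hμle : ∀ j, j ≤ p → μ j ≤ 1 := by
      intro j hj
      rcases Nat.eq_zero_or_pos j with rfl | hj1
      · simp [hμ 0]
      · exact (mu_lt_one' P (hmeas 0) μ hμ hμp hj1 hj).le
    rcases Nat.eq_zero_or_pos k with rfl | hk1
    · exact ⟨1, one_ne_top, fun N => by simp⟩
    choose! B hBtop hB using fun j (hj : j < k) => IH j hj (le_trans hj.le hkp)
    set C : ℝ≥0∞ := ∑ j ∈ Finset.range k, (k.choose j : ℝ≥0∞) * μ j * B j with hC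
    have hCtop : C ≠ ⊤ := by
      refine (ENNReal.sum_lt_top.mpr fun j hj => ?_).ne
      have hjk : j < k := Finset.mem_range.mp hj
      exact ENNReal.mul_lt_top
        (ENNReal.mul_lt_top (ENNReal.natCast_lt_top _)
          ((hμle j (le_trans hjk.le hkp)).trans_lt one_lt_top))
        (lt_top_iff_ne_top.mpr (hBtop j hjk))
    have hμk : μ k < 1 := mu_lt_one' P (hmeas 0) μ hμ hμp hk1 hkp
    have hsub0 : (1 : ℝ≥0∞) - μ k ≠ 0 := (tsub_pos_of_lt hμk).ne'
    refine ⟨C * (1 - μ k)⁻¹, ENNReal.mul_ne_top hCtop (ENNReal.inv_ne_top.mpr hsub0), ?_⟩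
    intro N
    induction N with
    | zero =>
      have : ∀ ω : Ω, (SS ξ 0 0 ω) ^ k = 0 := fun ω => by
        simp [SS, zero_pow hk1.ne']
      rw [lintegral_congr this]
      simp
    | succ N ihN =>
      calc ∫⁻ ω, (SS ξ 0 (N + 1) ω) ^ k ∂P
          = ∑ j ∈ Finset.range (k + 1),
              (k.choose j : ℝ≥0∞) * μ j * ∫⁻ ω, (SS ξ 1 N ω) ^ j ∂P :=
            main_step' P hmeas hindep hident μ hμ 0 N k
        _ = ∑ j ∈ Finset.range (k + 1),
              (k.choose j : ℝ≥0∞) * μ j * ∫⁻ ω, (SS ξ 0 N ω) ^ j ∂P := by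
            exact Finset.sum_congr rfl fun j _ => by
              rw [shift_inv' P hmeas hindep hident μ hμ N 1 j]
        _ = μ k * ∫⁻ ω, (SS ξ 0 N ω) ^ k ∂P
            + ∑ j ∈ Finset.range k,
              (k.choose j : ℝ≥0∞) * μ j * ∫⁻ ω, (SS ξ 0 N ω) ^ j ∂P := by
            rw [Finset.sum_range_succ, Nat.choose_self, Nat.cast_one, one_mul, add_comm]
        _ ≤ μ k * (C * (1 - μ k)⁻¹) + C := by
            refine add_le_add (mul_le_mul_right ihN _) ?_
            rw [hC]
            refine Finset.sum_le_sum fun j hj => ?_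
            exact mul_le_mul_right (hB j (Finset.mem_range.mp hj) N) _
        _ = C * (1 - μ k)⁻¹ := ennreal_key hμk


lemma lint_Y' (hmeas : ∀ j, Measurable (ξ j)) (Y : Ω → ℝ≥0∞)
    (hY : ∀ ω, Y ω = ∑' k, ∏ j ∈ Finset.range k, ENNReal.ofReal (ξ j ω)) (k : ℕ) :
    ∫⁻ ω, Y ω ^ k ∂P = ⨆ N, ∫⁻ ω, (SS ξ 0 N ω) ^ k ∂P := by
  have hYs : ∀ ω, Y ω = ⨆ N, SS ξ 0 N ω := by
    intro ω
    rw [hY ω, ENNReal.tsum_eq_iSup_nat]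
    exact iSup_congr fun N => Finset.sum_congr rfl fun m _ =>
      Finset.prod_congr rfl fun j _ => by rw [zero_add]
  have hpow : ∀ ω, Y ω ^ k = ⨆ N, (SS ξ 0 N ω) ^ k := by
    intro ω
    rw [hYs ω]
    rcases Nat.eq_zero_or_pos k with rfl | hk
    · simp
    · exact Monotone.map_iSup_of_continuousAt
        (ENNReal.continuous_pow k).continuousAt
        (fun a b h => pow_le_pow_left₀ zero_le h k) (zero_pow hk.ne')
  rw [lintegral_congr hpow]
  exact lintegral_iSup (fun N => (meas_SS' hmeas 0 N).pow_const k)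
    (fun N M h ω => pow_le_pow_left₀ zero_le (SS_mono' 0 ω h) k)


end Stmt8Aux

open Stmt8Aux in
/-- Theorem 2 of the paper, recursion formula. For an i.i.d.
sequence of positive random variables `ξ j` with `μ_p = E(ξ₁^p) < 1` for an
integer `p ≥ 1`, and `Y = ∑_{k≥0} ξ₁⋯ξ_k`, the moments of `Y` satisfy
`E(Y^p) = (1 - μ_p)⁻¹ ∑_{k=0}^{p-1} C(p,k) μ_k E(Y^k)`, where `μ_k = E(ξ₁^k)`
(and `μ₀ = 1`). -/
theorem stmt8_moment_recursion
    {Ω : Type*} [MeasurableSpace Ω] (P : Measure Ω) [IsProbabilityMeasure P]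
    (ξ : ℕ → Ω → ℝ)
    (hmeas : ∀ j, Measurable (ξ j))
    (hpos : ∀ j ω, 0 < ξ j ω)
    (hindep : iIndepFun ξ P)
    (hident : ∀ j, Measure.map (ξ j) P = Measure.map (ξ 0) P)
    (Y : Ω → ℝ≥0∞)
    (hY : ∀ ω, Y ω = ∑' k, ∏ j ∈ Finset.range k, ENNReal.ofReal (ξ j ω))
    (p : ℕ) (hp : 1 ≤ p)
    (μ : ℕ → ℝ≥0∞) (hμ : ∀ k, μ k = ∫⁻ ω, (ENNReal.ofReal (ξ 0 ω)) ^ (k : ℕ) ∂P)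
    (hμp : μ p < 1) :
    (∫⁻ ω, (Y ω) ^ (p : ℕ) ∂P) =
      (1 - μ p)⁻¹ *
        ∑ k ∈ Finset.range p, (p.choose k : ℝ≥0∞) * μ k * ∫⁻ ω, (Y ω) ^ (k : ℕ) ∂P := by
  set a : ℕ → ℕ → ℝ≥0∞ := fun N k => ∫⁻ ω, (SS ξ 0 N ω) ^ k ∂P with ha
  have hIY : ∀ k, ∫⁻ ω, (Y ω) ^ k ∂P = ⨆ N, a N k := fun k => lint_Y' P hmeas Y hY k
  have hamono : ∀ k, Monotone fun N => a N k := by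
    intro k N M h
    exact lintegral_mono fun ω => pow_le_pow_left₀ zero_le (SS_mono' 0 ω h) k
  -- recursion for partial sums, all shifted back to 0
  have hrecN : ∀ N q, a (N + 1) q =
      ∑ k ∈ Finset.range (q + 1), (q.choose k : ℝ≥0∞) * μ k * a N k := by
    intro N q
    simp only [ha]
    rw [main_step' P hmeas hindep hident μ hμ 0 N q]
    exact Finset.sum_congr rfl fun k _ => by
      rw [shift_inv' P hmeas hindep hident μ hμ N 1 k]
  -- supremum shift
  have hsupshift : ∀ q, (⨆ N, a N q) = ⨆ N, a (N + 1) q := by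
    intro q
    refine le_antisymm (iSup_le fun N => ?_) (iSup_le fun N => le_iSup (fun N => a N q) (N + 1))
    exact le_trans (hamono q (Nat.le_succ N)) (le_iSup (fun N => a (N + 1) q) N)
  -- the limiting recursion
  have hrec : ∫⁻ ω, (Y ω) ^ p ∂P =
      ∑ k ∈ Finset.range (p + 1), (p.choose k : ℝ≥0∞) * μ k * ∫⁻ ω, (Y ω) ^ k ∂P := by
    rw [hIY p, hsupshift p]
    calc (⨆ N, a (N + 1) p)
        = ⨆ N, ∑ k ∈ Finset.range (p + 1), (p.choose k : ℝ≥0∞) * μ k * a N k := by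
          exact iSup_congr fun N => hrecN N p
      _ = ∑ k ∈ Finset.range (p + 1), ⨆ N, (p.choose k : ℝ≥0∞) * μ k * a N k := by
          rw [ENNReal.finsetSum_iSup_of_monotone]
          intro k N M h
          exact mul_le_mul_right (hamono k h) _
      _ = ∑ k ∈ Finset.range (p + 1), (p.choose k : ℝ≥0∞) * μ k * ∫⁻ ω, (Y ω) ^ k ∂P := by
          refine Finset.sum_congr rfl fun k _ => ?_
          rw [hIY k, ENNReal.mul_iSup]
  -- finiteness
  have hfin : ∫⁻ ω, (Y ω) ^ p ∂P ≠ ⊤ := by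
    obtain ⟨B, hBtop, hB⟩ := bound' P hmeas hindep hident μ hμ hμp p le_rfl
    rw [hIY p]
    exact ne_top_of_le_ne_top hBtop (iSup_le hB)
  have hrec2 := hrec
  rw [Finset.sum_range_succ, Nat.choose_self, Nat.cast_one, one_mul] at hrec2
  have hμptop : μ p * ∫⁻ ω, (Y ω) ^ p ∂P ≠ ⊤ :=
    ENNReal.mul_ne_top (hμp.trans one_lt_top).ne hfin
  have h1 : (∫⁻ ω, (Y ω) ^ p ∂P) - μ p * ∫⁻ ω, (Y ω) ^ p ∂P =
      ∑ k ∈ Finset.range p, (p.choose k : ℝ≥0∞) * μ k * ∫⁻ ω, (Y ω) ^ k ∂P :=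
    ENNReal.sub_eq_of_eq_add hμptop hrec2
  have h2 : (1 - μ p) * ∫⁻ ω, (Y ω) ^ p ∂P =
      ∑ k ∈ Finset.range p, (p.choose k : ℝ≥0∞) * μ k * ∫⁻ ω, (Y ω) ^ k ∂P := by
    rw [ENNReal.sub_mul fun _ _ => hfin, one_mul, h1]
  have hsub0 : (1 : ℝ≥0∞) - μ p ≠ 0 := (tsub_pos_of_lt hμp).ne'
  have hsubtop : (1 : ℝ≥0∞) - μ p ≠ ⊤ := ne_top_of_le_ne_top one_ne_top tsub_le_self
  calc ∫⁻ ω, (Y ω) ^ p ∂P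
      = ((1 - μ p)⁻¹ * (1 - μ p)) * ∫⁻ ω, (Y ω) ^ p ∂P := by
        rw [ENNReal.inv_mul_cancel hsub0 hsubtop, one_mul]
    _ = (1 - μ p)⁻¹ *
        ∑ k ∈ Finset.range p, (p.choose k : ℝ≥0∞) * μ k * ∫⁻ ω, (Y ω) ^ k ∂P := by
        rw [mul_assoc, h2]
end

section
/- Let Y = Σ_{k≥0} exp(S_k − kν) with S_k a simple symmetric random walk. If 0 < ν < log cosh(1) ≈ 0.43378, then E(Y) = ∞, and more generally for every 0 < ν < 1 only finitely many positive integer moments of Y are finite: E(Y^k) = ∞ whenever ν ≤ k^{-1} log cosh(k). -/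
open MeasureTheory ProbabilityTheory Finset ENNReal

lemma aux_single {Ω : Type*} [MeasurableSpace Ω] (P : Measure Ω)
    (f : Ω → ℝ) (hf : Measurable f)
    (hlaw : Measure.map f P =
      (1/2 : ℝ≥0∞) • Measure.dirac (1 : ℝ) + (1/2 : ℝ≥0∞) • Measure.dirac (-1 : ℝ))
    (t : ℝ) :
    ∫⁻ ω, ENNReal.ofReal (Real.exp (t * f ω)) ∂P = ENNReal.ofReal (Real.cosh t) := by
  have hg : Measurable fun x : ℝ => ENNReal.ofReal (Real.exp (t * x)) :=
    (Real.measurable_exp.comp (measurable_const.mul measurable_id)).ennreal_ofReal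
  rw [← lintegral_map hg hf, hlaw]
  rw [lintegral_add_measure, lintegral_smul_measure, lintegral_smul_measure,
    lintegral_dirac, lintegral_dirac]
  rw [Real.cosh_eq]
  rw [ENNReal.ofReal_div_of_pos two_pos, ENNReal.ofReal_add (Real.exp_nonneg _) (Real.exp_nonneg _)]
  have h2 : (ENNReal.ofReal 2) = 2 := by norm_num
  rw [h2, mul_one, mul_neg_one]
  rw [ENNReal.add_div]
  simp [ENNReal.div_eq_inv_mul]

lemma aux_key {Ω : Type*} [MeasurableSpace Ω] (P : Measure Ω) [IsProbabilityMeasure P]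
    (X : ℕ → Ω → ℝ)
    (hmeas : ∀ j, Measurable (X j))
    (hindep : iIndepFun X P)
    (hlaw : ∀ j, Measure.map (X j) P =
      (1/2 : ℝ≥0∞) • Measure.dirac (1 : ℝ) + (1/2 : ℝ≥0∞) • Measure.dirac (-1 : ℝ))
    (t : ℝ) (n : ℕ) :
    ∫⁻ ω, ENNReal.ofReal (Real.exp (t * ∑ j ∈ Finset.range n, X j ω)) ∂P
      = (ENNReal.ofReal (Real.cosh t)) ^ n := by
  induction n with
  | zero => simp
  | succ n ih =>
    have hφ : Measurable fun x : ℝ => ENNReal.ofReal (Real.exp (t * x)) :=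
      (Real.measurable_exp.comp (measurable_const.mul measurable_id)).ennreal_ofReal
    have hsum : Measurable fun ω => ∑ j ∈ Finset.range n, X j ω :=
      Finset.measurable_sum _ fun j _ => hmeas j
    have hsum' : Measurable (∑ j ∈ Finset.range n, X j) := by
      have he : (∑ j ∈ Finset.range n, X j) = fun ω => ∑ j ∈ Finset.range n, X j ω := by
        ext ω; simp
      rw [he]; exact hsum
    have hind : IndepFun (∑ j ∈ Finset.range n, X j) (X n) P :=
      hindep.indepFun_finsetSum_of_notMem hmeas (by simp)
    have hprod := lintegral_mul_eq_lintegral_mul_lintegral_of_indepFun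
      (μ := P) (hφ.comp hsum') (hφ.comp (hmeas n)) (hind.comp hφ hφ)
    simp only [Pi.mul_apply, Function.comp_apply, Finset.sum_apply] at hprod
    have heq : ∀ ω,
        ENNReal.ofReal (Real.exp (t * ∑ j ∈ Finset.range (n+1), X j ω))
          = ENNReal.ofReal (Real.exp (t * ∑ j ∈ Finset.range n, X j ω))
            * ENNReal.ofReal (Real.exp (t * X n ω)) := by
      intro ω
      rw [Finset.sum_range_succ, mul_add, Real.exp_add,
        ENNReal.ofReal_mul (Real.exp_nonneg _)]
    simp_rw [heq]
    rw [hprod, ih, aux_single P (X n) (hmeas n) (hlaw n) t, pow_succ]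

/-- Let `Y = ∑_{k≥0} exp(S_k - kν)` with `S_k` a simple
symmetric random walk.  If `0 < ν < log (cosh 1)` then `E(Y) = ∞`; more
generally, for `0 < ν < 1`, `E(Y^k) = ∞` whenever `ν ≤ k⁻¹ log (cosh k)`
(so only finitely many positive integer moments of `Y` are finite). -/
theorem stmt10_infinite_moments
    {Ω : Type*} [MeasurableSpace Ω] (P : Measure Ω) [IsProbabilityMeasure P]
    (X : ℕ → Ω → ℝ)
    (hmeas : ∀ j, Measurable (X j))
    (hindep : iIndepFun X P)
    (hlaw : ∀ j, Measure.map (X j) P =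
      (1/2 : ℝ≥0∞) • Measure.dirac (1 : ℝ) + (1/2 : ℝ≥0∞) • Measure.dirac (-1 : ℝ))
    (ν : ℝ) (hν : 0 < ν)
    (Y : Ω → ℝ≥0∞)
    (hY : ∀ ω, Y ω = ∑' k : ℕ,
      ENNReal.ofReal (Real.exp ((∑ j ∈ Finset.range k, X j ω) - k * ν))) :
    (ν < Real.log (Real.cosh 1) → (∫⁻ ω, Y ω ∂P) = ⊤) ∧
    (∀ k : ℕ, 1 ≤ k → ν ≤ (k : ℝ)⁻¹ * Real.log (Real.cosh k) →
      (∫⁻ ω, (Y ω) ^ (k : ℕ) ∂P) = ⊤) := by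
  -- abbreviation for the terms
  set a : ℕ → Ω → ℝ≥0∞ :=
    fun n ω => ENNReal.ofReal (Real.exp ((∑ j ∈ Finset.range n, X j ω) - n * ν)) with ha
  have hameas : ∀ n, Measurable (a n) := by
    intro n
    exact (Real.measurable_exp.comp
      ((Finset.measurable_sum _ fun j _ => hmeas j).sub measurable_const)).ennreal_ofReal
  -- main claim : all moments with ν ≤ k⁻¹ log cosh k are infinite
  have main : ∀ k : ℕ, 1 ≤ k → ν ≤ (k : ℝ)⁻¹ * Real.log (Real.cosh k) →
      (∫⁻ ω, (Y ω) ^ (k : ℕ) ∂P) = ⊤ := by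
    intro k hk hνk
    obtain ⟨m, rfl⟩ : ∃ m, k = m + 1 := ⟨k - 1, by omega⟩
    set k := m + 1
    have hkpos : (0:ℝ) < (k:ℝ) := by positivity
    -- the base μ_k = e^{-kν} cosh k ≥ 1
    have hbase : (1:ℝ) ≤ Real.exp (-(k * ν)) * Real.cosh k := by
      have h1 : (k:ℝ) * ν ≤ Real.log (Real.cosh k) := by
        have := mul_le_mul_of_nonneg_left hνk (le_of_lt hkpos)
        rwa [mul_inv_cancel_left₀ (ne_of_gt hkpos)] at this
      have h2 : Real.exp ((k:ℝ) * ν) ≤ Real.cosh k := by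
        calc Real.exp ((k:ℝ) * ν) ≤ Real.exp (Real.log (Real.cosh k)) := Real.exp_le_exp.2 h1
        _ = Real.cosh k := Real.exp_log (Real.cosh_pos _)
      calc (1:ℝ) = Real.exp (-(k * ν)) * Real.exp ((k:ℝ) * ν) := by
            rw [← Real.exp_add]; simp
        _ ≤ Real.exp (-(k * ν)) * Real.cosh k :=
            mul_le_mul_of_nonneg_left h2 (Real.exp_nonneg _)
    -- the value of each integral term
    have hterm : ∀ n : ℕ, ∫⁻ ω, (a n ω) ^ k ∂P =
        (ENNReal.ofReal (Real.exp (-(k * ν)) * Real.cosh k)) ^ n := by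
      intro n
      have hpt : ∀ ω, (a n ω) ^ k =
          ENNReal.ofReal (Real.exp (-((k:ℝ) * n * ν)))
            * ENNReal.ofReal (Real.exp ((k:ℝ) * ∑ j ∈ Finset.range n, X j ω)) := by
        intro ω
        rw [ha]
        rw [← ENNReal.ofReal_pow (Real.exp_nonneg _), ← Real.exp_nat_mul,
          ← ENNReal.ofReal_mul (Real.exp_nonneg _), ← Real.exp_add]
        ring_nf
      have hme : Measurable fun ω : Ω =>
          ENNReal.ofReal (Real.exp ((k:ℝ) * ∑ j ∈ Finset.range n, X j ω)) := by
        apply Measurable.ennreal_ofReal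
        exact Real.measurable_exp.comp
          (measurable_const.mul (Finset.measurable_sum _ fun j _ => hmeas j))
      simp_rw [hpt]
      rw [lintegral_const_mul _ hme]
      rw [aux_key P X hmeas hindep hlaw (k:ℝ) n]
      rw [ENNReal.ofReal_mul (Real.exp_nonneg _), mul_pow,
        ← ENNReal.ofReal_pow (Real.exp_nonneg _), ← Real.exp_nat_mul]
      ring_nf
    -- each term is ≥ 1
    have hterm1 : ∀ n : ℕ, (1:ℝ≥0∞) ≤ ∫⁻ ω, (a n ω) ^ k ∂P := by
      intro n
      rw [hterm n]
      exact one_le_pow_of_one_le' (ENNReal.one_le_ofReal.2 hbase) n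
    -- pointwise superadditivity : ∑' n, (a n ω)^k ≤ (Y ω)^k
    have hsup : ∀ ω, (∑' n : ℕ, (a n ω) ^ k) ≤ (Y ω) ^ k := by
      intro ω
      have hle : ∀ n, a n ω ≤ Y ω := by
        intro n; rw [hY ω]; exact ENNReal.le_tsum n
      calc (∑' n : ℕ, (a n ω) ^ k) ≤ ∑' n : ℕ, (Y ω) ^ m * a n ω := by
            refine ENNReal.tsum_le_tsum fun n => ?_
            calc (a n ω) ^ k = (a n ω) ^ m * a n ω := by rw [pow_succ]
              _ ≤ (Y ω) ^ m * a n ω :=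
                mul_le_mul_left (pow_le_pow_left' (hle n) m) _
        _ = (Y ω) ^ m * ∑' n : ℕ, a n ω := ENNReal.tsum_mul_left
        _ = (Y ω) ^ k := by rw [← hY ω, pow_succ]
    -- conclude
    have hlow : (∑' n : ℕ, ∫⁻ ω, (a n ω) ^ k ∂P) ≤ ∫⁻ ω, (Y ω) ^ k ∂P := by
      rw [← lintegral_tsum (fun n => ((hameas n).pow_const k).aemeasurable)]
      exact lintegral_mono hsup
    have htop : (∑' n : ℕ, ∫⁻ ω, (a n ω) ^ k ∂P) = ⊤ := by
      refine top_le_iff.1 ?_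
      calc (⊤:ℝ≥0∞) = ∑' _ : ℕ, (1:ℝ≥0∞) :=
            (ENNReal.tsum_const_eq_top_of_ne_zero one_ne_zero).symm
        _ ≤ _ := ENNReal.tsum_le_tsum hterm1
    exact top_le_iff.1 (htop ▸ hlow)
  refine ⟨?_, main⟩
  intro hν1
  have := main 1 le_rfl (by simpa using le_of_lt hν1)
  simpa using this
end
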